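/- Let k ≥ 2 be an integer, let a₁, …, a_k be positive integers, and let b₁, …, b_k be integers. Assume that a_i·b_j ≠ a_j·b_i for every 1 ≤ i < j ≤ k. Then the set of positive integers n for which φ(a₁n+b₁) > φ(a₂n+b₂) > ⋯ > φ(a_k n+b_k) (with all a_jn+b_j positive) has positive lower density. -/

import Mathlib

set_option maxHeartbeats 1000000

open Finset





lemma aux_sq_sum_range (N : ℕ) : ∑ i ∈ range N, (1:ℝ)/((i:ℝ)+2)^2 ≤ 1 - 1/((N:ℝ)+1) := by
  induction N with
  | zero => simp
  | succ N ih =>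
    rw [Finset.sum_range_succ]
    have h1 : (0:ℝ) < (N:ℝ)+1 := by positivity
    have h2 : (0:ℝ) < (N:ℝ)+2 := by positivity
    have key : (1:ℝ)/((N:ℝ)+2)^2 ≤ 1/((N:ℝ)+1) - 1/((N:ℝ)+2) := by
      rw [div_sub_div _ _ (ne_of_gt h1) (ne_of_gt h2)]
      rw [div_le_div_iff₀ (by positivity) (by positivity)]
      nlinarith [sq_nonneg ((N:ℝ)+1)]
    have hcast : ((N+1:ℕ):ℝ) + 1 = (N:ℝ) + 2 := by push_cast; ring
    rw [hcast]
    linarith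

lemma aux_sum_map_shift (V : Finset ℕ) (N c : ℕ) (hc : 0 < c) (f : ℝ → ℝ)
    (hV : ∀ q ∈ V, c ≤ q ∧ q < N + c) (hf : ∀ q : ℕ, 0 ≤ f q) :
    ∑ q ∈ V, f (q:ℝ) ≤ ∑ i ∈ range N, f ((i:ℝ)+c) := by
  classical
  have hsub : V ⊆ (range N).image (fun i : ℕ => i + c) := by
    intro q hq
    simp only [mem_image, mem_range]
    exact ⟨q - c, by have := hV q hq; omega, by have := hV q hq; omega⟩
  calc ∑ q ∈ V, f (q:ℝ)
      ≤ ∑ q ∈ (range N).image (fun i : ℕ => i + c), f (q:ℝ) :=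
        Finset.sum_le_sum_of_subset_of_nonneg hsub (fun i _ _ => hf _)
    _ = ∑ i ∈ range N, f ((i:ℝ)+c) := by
        rw [Finset.sum_image (fun a _ b _ h => by omega)]
        exact Finset.sum_congr rfl (fun i _ => by push_cast; ring_nf)

lemma aux_sq_sum (V : Finset ℕ) (hV : ∀ q ∈ V, 2 ≤ q) : ∑ q ∈ V, (1:ℝ)/(q:ℝ)^2 ≤ 1 := by
  obtain ⟨N, hN⟩ : ∃ N, ∀ q ∈ V, q < N + 2 := by
    rcases V.exists_le with ⟨N, hN⟩
    exact ⟨N, fun q hq => by have := hN q hq; omega⟩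
  have := aux_sum_map_shift V N 2 (by norm_num) (fun x => 1/x^2)
    (fun q hq => ⟨hV q hq, hN q hq⟩) (fun q => by positivity)
  have h2 := aux_sq_sum_range N
  have h : (0:ℝ) ≤ 1/((N:ℝ)+1) := by positivity
  push_cast at this
  linarith

lemma aux_harm_range (N : ℕ) : ∑ i ∈ range N, (1:ℝ)/((i:ℝ)+1) ≤ 2*Real.sqrt N := by
  induction N with
  | zero => simp
  | succ N ih =>
    rw [Finset.sum_range_succ]
    have h1 : Real.sqrt N ≤ Real.sqrt ((N:ℝ)+1) := Real.sqrt_le_sqrt (by linarith)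
    have h2 : (0:ℝ) ≤ Real.sqrt N := Real.sqrt_nonneg _
    have h3 : Real.sqrt ((N:ℝ)+1) * Real.sqrt ((N:ℝ)+1) = (N:ℝ)+1 :=
      Real.mul_self_sqrt (by positivity)
    have hs : Real.sqrt N * Real.sqrt N = (N:ℝ) := Real.mul_self_sqrt (Nat.cast_nonneg N)
    have key : (1:ℝ)/((N:ℝ)+1) ≤ 2*Real.sqrt ((N:ℝ)+1) - 2*Real.sqrt N := by
      rw [div_le_iff₀ (by positivity)]
      nlinarith [sq_nonneg (Real.sqrt ((N:ℝ)+1) - Real.sqrt N)]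
    have hcast : ((N+1:ℕ):ℝ) = (N:ℝ) + 1 := by push_cast; ring
    rw [hcast]
    linarith

lemma aux_harmonic (V : Finset ℕ) (N : ℕ) (hV : ∀ q ∈ V, 1 ≤ q ∧ q ≤ N) :
    ∑ q ∈ V, (1:ℝ)/q ≤ 2*Real.sqrt N := by
  have := aux_sum_map_shift V N 1 (by norm_num) (fun x => 1/x)
    (fun q hq => ⟨(hV q hq).1, by have := hV q hq; omega⟩) (fun q => by positivity)
  have h2 := aux_harm_range N
  push_cast at this
  linarith





lemma aux_prod_pos (V : Finset ℕ) (hV : ∀ q ∈ V, 2 ≤ q) :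
    0 < ∏ q ∈ V, (1 - 1/(q:ℝ)) :=
  Finset.prod_pos fun q hq => by
    have h2 := hV q hq
    have : (2:ℝ) ≤ (q:ℝ) := by exact_mod_cast h2
    have : 1/(q:ℝ) ≤ 1/2 := by
      apply div_le_div_of_nonneg_left <;> linarith
    linarith

lemma aux_prod_le_one (V : Finset ℕ) (hV : ∀ q ∈ V, 2 ≤ q) :
    ∏ q ∈ V, (1 - 1/(q:ℝ)) ≤ 1 := by
  apply Finset.prod_le_one
  · intro q hq
    have : (2:ℝ) ≤ (q:ℝ) := by exact_mod_cast hV q hq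
    have : 1/(q:ℝ) ≤ 1/2 := by apply div_le_div_of_nonneg_left <;> linarith
    linarith
  · intro q hq
    have : (0:ℝ) < (q:ℝ) := by have := hV q hq; positivity
    have : (0:ℝ) < 1/(q:ℝ) := by positivity
    linarith

lemma aux_prod_le_exp (V : Finset ℕ) (hV : ∀ q ∈ V, 2 ≤ q) :
    ∏ q ∈ V, (1 - 1/(q:ℝ)) ≤ Real.exp (-∑ q ∈ V, 1/(q:ℝ)) := by
  rw [show (-∑ q ∈ V, 1/(q:ℝ)) = ∑ q ∈ V, -(1/(q:ℝ)) by rw [Finset.sum_neg_distrib], Real.exp_sum]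
  apply Finset.prod_le_prod
  · intro q hq
    have : (2:ℝ) ≤ (q:ℝ) := by exact_mod_cast hV q hq
    have : 1/(q:ℝ) ≤ 1/2 := by apply div_le_div_of_nonneg_left <;> linarith
    linarith
  · intro q hq
    have := Real.add_one_le_exp (-(1/(q:ℝ)))
    linarith

lemma aux_exp_le_prod (V : Finset ℕ) (hV : ∀ q ∈ V, 2 ≤ q) :
    Real.exp (-2 * ∑ q ∈ V, 1/(q:ℝ)) ≤ ∏ q ∈ V, (1 - 1/(q:ℝ)) := by
  have : -2 * ∑ q ∈ V, 1/(q:ℝ) = ∑ q ∈ V, (-2/(q:ℝ)) := by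
    rw [Finset.mul_sum]; exact Finset.sum_congr rfl (fun q _ => by ring)
  rw [this, Real.exp_sum]
  apply Finset.prod_le_prod
  · intro q _; positivity
  · intro q hq
    have hq2 : (2:ℝ) ≤ (q:ℝ) := by exact_mod_cast hV q hq
    have hq0 : (0:ℝ) < (q:ℝ) := by linarith
    have h1 : Real.exp (2/(q:ℝ)) * Real.exp (-2/(q:ℝ)) = 1 := by
      rw [← Real.exp_add]; ring_nf; exact Real.exp_zero
    have h2 : 1 + 2/(q:ℝ) ≤ Real.exp (2/(q:ℝ)) := by
      have := Real.add_one_le_exp (2/(q:ℝ)); linarith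
    have h3 : (0:ℝ) < 1 + 2/(q:ℝ) := by positivity
    have h4 : Real.exp (-2/(q:ℝ)) ≤ 1/(1 + 2/(q:ℝ)) := by
      rw [le_div_iff₀ h3]
      calc Real.exp (-2/(q:ℝ)) * (1 + 2/(q:ℝ)) ≤ Real.exp (-2/(q:ℝ)) * Real.exp (2/(q:ℝ)) := by
            apply mul_le_mul_of_nonneg_left h2 (Real.exp_nonneg _)
        _ = 1 := by rw [← Real.exp_add]; ring_nf; exact Real.exp_zero
    have h5 : 1/(1 + 2/(q:ℝ)) ≤ 1 - 1/(q:ℝ) := by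
      rw [div_le_iff₀ h3]
      have hq0' : (q:ℝ) ≠ 0 := ne_of_gt hq0
      have expand : (1 - 1/(q:ℝ)) * (1 + 2/(q:ℝ)) = 1 + 1/(q:ℝ) - 2/(q:ℝ)^2 := by
        field_simp; ring
      rw [expand]
      have : 2/(q:ℝ)^2 ≤ 1/(q:ℝ) := by
        rw [div_le_div_iff₀ (by positivity) hq0]
        nlinarith
      linarith
    linarith

lemma aux_totient_formula (m : ℕ) :
    (m.totient : ℝ) = m * ∏ p ∈ m.primeFactors, (1 - 1/(p:ℝ)) := by
  have h := Nat.totient_eq_mul_prod_factors m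
  have := congrArg (Rat.cast : ℚ → ℝ) h
  push_cast at this
  convert this using 2
  exact Finset.prod_congr rfl (fun p _ => by rw [one_div])





lemma aux_not_summable_restrict (E : Finset ℕ) (G : ℕ) :
    ¬ Summable (fun n : ℕ => if n.Prime ∧ G < n ∧ n ∉ E then (1:ℝ)/n else 0) := by
  intro hsum
  have hfin : Summable (fun n : ℕ => if n.Prime ∧ ¬(G < n ∧ n ∉ E) then (1:ℝ)/n else 0) := by
    apply summable_of_finite_support
    apply Set.Finite.subset (Set.finite_Icc 0 (max G (E.sup id)))
    intro n hn
    simp only [Function.mem_support, ne_eq, ite_eq_right_iff, not_forall] at hn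
    obtain ⟨⟨hp, hcond⟩, -⟩ := hn
    simp only [Set.mem_Icc]
    push_neg at hcond
    rcases le_or_gt n G with h | h
    · exact ⟨Nat.zero_le n, le_trans h (le_max_left _ _)⟩
    · refine ⟨Nat.zero_le n, le_trans ?_ (le_max_right _ _)⟩
      exact Finset.le_sup (f := id) (hcond h)
  have : Summable (Set.indicator {p | p.Prime} (fun n : ℕ => (1:ℝ)/n)) := by
    have heq : Set.indicator {p | p.Prime} (fun n : ℕ => (1:ℝ)/n)
        = (fun n : ℕ => if n.Prime ∧ G < n ∧ n ∉ E then (1:ℝ)/n else 0)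
          + (fun n : ℕ => if n.Prime ∧ ¬(G < n ∧ n ∉ E) then (1:ℝ)/n else 0) := by
      funext n
      simp only [Set.indicator_apply, Set.mem_setOf_eq, Pi.add_apply]
      by_cases hp : n.Prime
      · by_cases hc : G < n ∧ n ∉ E <;> simp [hp, hc]
      · simp [hp]
    rw [heq]
    exact hsum.add hfin
  exact not_summable_one_div_on_primes this

lemma aux_prime_set_small (ε : ℝ) (hε : 0 < ε) (E : Finset ℕ) (G : ℕ) :
    ∃ Q : Finset ℕ, (∀ p ∈ Q, p.Prime ∧ G < p ∧ p ∉ E) ∧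
      ∏ p ∈ Q, (1 - 1/(p:ℝ)) < ε := by
  classical
  set f := fun n : ℕ => if n.Prime ∧ G < n ∧ n ∉ E then (1:ℝ)/n else 0 with hf
  have hnonneg : 0 ≤ f := by
    intro n; simp only [hf]; split <;> positivity
  have : ¬ ∀ u : Finset ℕ, ∑ x ∈ u, f x ≤ -Real.log ε := by
    intro h
    exact aux_not_summable_restrict E G (summable_of_sum_le hnonneg h)
  push_neg at this
  obtain ⟨u, hu⟩ := this
  refine ⟨u.filter (fun p => p.Prime ∧ G < p ∧ p ∉ E), fun p hp => (Finset.mem_filter.mp hp).2, ?_⟩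
  set Q := u.filter (fun p => p.Prime ∧ G < p ∧ p ∉ E) with hQ
  have hQ2 : ∀ q ∈ Q, 2 ≤ q := fun q hq => ((Finset.mem_filter.mp hq).2.1).two_le
  have hsumQ : ∑ x ∈ u, f x = ∑ q ∈ Q, (1:ℝ)/q := by
    rw [hQ, Finset.sum_filter]
  have hprod_le : ∏ q ∈ Q, (1 - 1/(q:ℝ)) ≤ Real.exp (-∑ q ∈ Q, 1/(q:ℝ)) := by
    rw [show (-∑ q ∈ Q, 1/(q:ℝ)) = ∑ q ∈ Q, -(1/(q:ℝ)) by rw [Finset.sum_neg_distrib],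
      Real.exp_sum]
    apply Finset.prod_le_prod
    · intro q hq
      have : (2:ℝ) ≤ (q:ℝ) := by exact_mod_cast hQ2 q hq
      have : 1/(q:ℝ) ≤ 1/2 := by apply div_le_div_of_nonneg_left <;> linarith
      linarith
    · intro q hq
      have := Real.add_one_le_exp (-(1/(q:ℝ)))
      linarith
  calc ∏ q ∈ Q, (1 - 1/(q:ℝ)) ≤ Real.exp (-∑ q ∈ Q, 1/(q:ℝ)) := hprod_le
    _ < Real.exp (Real.log ε) := by
        apply Real.exp_lt_exp.mpr
        rw [hsumQ] at hu
        linarith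
    _ = ε := Real.exp_log hε





lemma aux_card_residue_lower (M x n₀ v : ℕ) (hM : 0 < M) :
    (x:ℝ)/M - n₀ - 1 ≤ (((Finset.Ioc (n₀-1) x)).filter (· ≡ v [MOD M])).card := by
  have h := Nat.Ioc_filter_modEq_card (n₀-1) x hM v
  have hcard : (⌊((x:ℚ) - v)/M⌋ - ⌊(((n₀-1:ℕ):ℚ) - v)/M⌋ : ℤ)
      ≤ (((Finset.Ioc (n₀-1) x)).filter (· ≡ v [MOD M])).card := by
    rw [h]; exact le_max_left _ _
  have hM0 : (0:ℚ) < (M:ℚ) := by exact_mod_cast hM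
  have h1 : ((x:ℚ) - v)/M - 1 < (⌊((x:ℚ) - v)/M⌋ : ℚ) := Int.sub_one_lt_floor _
  have h2 : (⌊(((n₀-1:ℕ):ℚ) - v)/M⌋ : ℚ) ≤ (((n₀-1:ℕ):ℚ) - v)/M := Int.floor_le _
  have key : (x:ℚ)/M - n₀ - 1 ≤ ((((Finset.Ioc (n₀-1) x)).filter (· ≡ v [MOD M])).card : ℚ) := by
    have hc : ((⌊((x:ℚ) - v)/M⌋ - ⌊(((n₀-1:ℕ):ℚ) - v)/M⌋ : ℤ) : ℚ)
        ≤ ((((Finset.Ioc (n₀-1) x)).filter (· ≡ v [MOD M])).card : ℚ) := by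
      exact_mod_cast hcard
    push_cast at hc
    have hn1 : ((n₀-1:ℕ):ℚ) ≤ (n₀:ℚ) := by
      have : (n₀-1:ℕ) ≤ n₀ := Nat.sub_le _ _
      exact_mod_cast this
    have hM1 : (1:ℚ) ≤ (M:ℚ) := by exact_mod_cast hM
    have e1 : ((x:ℚ) - v)/M = (x:ℚ)/M - (v:ℚ)/M := by ring
    have e2 : (((n₀-1:ℕ):ℚ) - v)/M = ((n₀-1:ℕ):ℚ)/M - (v:ℚ)/M := by ring
    simp only [e1, e2] at h1 h2 hc
    have h3 : ((n₀-1:ℕ):ℚ)/M ≤ (n₀:ℚ) := by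
      calc ((n₀-1:ℕ):ℚ)/M ≤ ((n₀-1:ℕ):ℚ)/1 := by
            apply div_le_div_of_nonneg_left _ _ hM1 <;> first | positivity | norm_num
        _ = ((n₀-1:ℕ):ℚ) := by norm_num
        _ ≤ (n₀:ℚ) := hn1
    linarith
  have key' := (Rat.cast_le (K := ℝ)).mpr key
  push_cast at key'
  convert key' using 2

lemma aux_card_modeq_upper (x d : ℕ) (hd : 0 < d) (S : Finset ℕ) (hS : S ⊆ Finset.Icc 1 x)
    (h : ∀ m ∈ S, ∀ n ∈ S, m ≡ n [MOD d]) : (S.card : ℝ) ≤ (x:ℝ)/d + 1 := by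
  classical
  rcases S.eq_empty_or_nonempty with rfl | hne
  · simp; positivity
  have hnat : S.card ≤ x/d + 1 := by
    set m₀ := S.min' hne with hm₀
    have hm₀S : m₀ ∈ S := S.min'_mem hne
    have hmaps : ∀ n ∈ S, (n - m₀)/d ∈ Finset.range (x/d + 1) := by
      intro n hn
      simp only [Finset.mem_range]
      have hnx : n ≤ x := (Finset.mem_Icc.mp (hS hn)).2
      have : (n - m₀)/d ≤ x/d := Nat.div_le_div_right (le_trans (Nat.sub_le _ _) hnx)
      omega
    have hinj : ∀ n ∈ S, ∀ n' ∈ S, (n - m₀)/d = (n' - m₀)/d → n = n' := by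
      intro n hn n' hn' heq
      have hmn : m₀ ≤ n := S.min'_le n hn
      have hmn' : m₀ ≤ n' := S.min'_le n' hn'
      have hd1 : d ∣ n - m₀ := (Nat.modEq_iff_dvd' hmn).mp ((h m₀ hm₀S n hn))
      have hd2 : d ∣ n' - m₀ := (Nat.modEq_iff_dvd' hmn').mp ((h m₀ hm₀S n' hn'))
      have e1 : n - m₀ = d * ((n - m₀)/d) := (Nat.mul_div_cancel' hd1).symm
      have e2 : n' - m₀ = d * ((n' - m₀)/d) := (Nat.mul_div_cancel' hd2).symm
      rw [heq] at e1
      omega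
    calc S.card = (S.image (fun n => (n - m₀)/d)).card :=
          (Finset.card_image_of_injOn (fun n hn n' hn' => hinj n hn n' hn')).symm
      _ ≤ (Finset.range (x/d + 1)).card := Finset.card_le_card (by
          intro t ht
          obtain ⟨n, hn, rfl⟩ := Finset.mem_image.mp ht
          exact hmaps n hn)
      _ = x/d + 1 := Finset.card_range _
  have : ((x/d : ℕ):ℝ) ≤ (x:ℝ)/d := Nat.cast_div_le
  calc (S.card : ℝ) ≤ ((x/d + 1 : ℕ):ℝ) := by exact_mod_cast hnat
    _ = ((x/d : ℕ):ℝ) + 1 := by push_cast; ring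
    _ ≤ (x:ℝ)/d + 1 := by linarith

lemma aux_markov {α : Type*} [DecidableEq α] (A : Finset α) (X : α → ℝ)
    (hX : ∀ n ∈ A, 0 ≤ X n) (T : ℝ) (hT : 0 < T) :
    ((A.filter (fun n => T < X n)).card : ℝ) ≤ (∑ n ∈ A, X n) / T := by
  classical
  rw [le_div_iff₀ hT]
  calc ((A.filter (fun n => T < X n)).card : ℝ) * T
      = ∑ _n ∈ A.filter (fun n => T < X n), T := by rw [Finset.sum_const, nsmul_eq_mul]
    _ ≤ ∑ n ∈ A.filter (fun n => T < X n), X n :=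
        Finset.sum_le_sum (fun n hn => le_of_lt (Finset.mem_filter.mp hn).2)
    _ ≤ ∑ n ∈ A, X n :=
        Finset.sum_le_sum_of_subset_of_nonneg (Finset.filter_subset _ _)
          (fun n hn _ => hX n hn)

lemma aux_swap (A U : Finset ℕ) (F : ℕ → Finset ℕ) (g : ℕ → ℝ)
    (hFU : ∀ n ∈ A, F n ⊆ U) :
    ∑ n ∈ A, ∑ q ∈ F n, g q
      = ∑ q ∈ U, ((A.filter (fun n => q ∈ F n)).card : ℝ) * g q := by
  classical
  have step1 : ∀ n ∈ A, ∑ q ∈ F n, g q = ∑ q ∈ U, if q ∈ F n then g q else 0 := by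
    intro n hn
    rw [← Finset.sum_filter]
    congr 1
    ext q
    simp only [Finset.mem_filter]
    exact ⟨fun hq => ⟨hFU n hn hq, hq⟩, fun hq => hq.2⟩
  rw [Finset.sum_congr rfl step1, Finset.sum_comm]
  apply Finset.sum_congr rfl
  intro q _
  rw [← Finset.sum_filter, Finset.sum_const, nsmul_eq_mul]





lemma aux_pf_two_le (m : ℕ) : ∀ q ∈ m.primeFactors, 2 ≤ q :=
  fun q hq => (Nat.prime_of_mem_primeFactors hq).two_le

lemma aux_prod_pos' (V : Finset ℕ) (hV : ∀ q ∈ V, 2 ≤ q) :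
    0 < ∏ q ∈ V, (1 - 1/(q:ℝ)) :=
  Finset.prod_pos fun q hq => by
    have : (2:ℝ) ≤ (q:ℝ) := by exact_mod_cast hV q hq
    have : 1/(q:ℝ) ≤ 1/2 := by apply div_le_div_of_nonneg_left <;> linarith
    linarith

lemma aux_prod_le_one' (V : Finset ℕ) (hV : ∀ q ∈ V, 2 ≤ q) :
    ∏ q ∈ V, (1 - 1/(q:ℝ)) ≤ 1 := by
  apply Finset.prod_le_one
  · intro q hq
    have : (2:ℝ) ≤ (q:ℝ) := by exact_mod_cast hV q hq
    have : 1/(q:ℝ) ≤ 1/2 := by apply div_le_div_of_nonneg_left <;> linarith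
    linarith
  · intro q hq
    have : (2:ℝ) ≤ (q:ℝ) := by exact_mod_cast hV q hq
    have : (0:ℝ) < 1/(q:ℝ) := by positivity
    linarith

lemma aux_totient_upper (m : ℕ) (P : Finset ℕ) (hP : P ⊆ m.primeFactors) :
    (m.totient : ℝ) ≤ m * ∏ p ∈ P, (1 - 1/(p:ℝ)) := by
  classical
  rw [aux_totient_formula]
  rw [← Finset.prod_sdiff hP]
  have h1 : ∏ q ∈ m.primeFactors \ P, (1 - 1/(q:ℝ)) ≤ 1 :=
    aux_prod_le_one' _ (fun q hq => aux_pf_two_le m q (Finset.mem_sdiff.mp hq).1)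
  have h2 : (0:ℝ) < ∏ q ∈ P, (1 - 1/(q:ℝ)) :=
    aux_prod_pos' _ (fun q hq => aux_pf_two_le m q (hP hq))
  have hm : (0:ℝ) ≤ (m:ℝ) := Nat.cast_nonneg m
  have := mul_le_of_le_one_left h2.le h1
  exact mul_le_mul_of_nonneg_left this hm

lemma aux_totient_lower (m : ℕ) (W : Finset ℕ) (hW : m.primeFactors ⊆ W)
    (hW2 : ∀ q ∈ W, 2 ≤ q) :
    (m:ℝ) * ∏ p ∈ W, (1 - 1/(p:ℝ)) ≤ m.totient := by
  classical
  rw [aux_totient_formula]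
  rw [← Finset.prod_sdiff hW]
  have h1 : ∏ q ∈ W \ m.primeFactors, (1 - 1/(q:ℝ)) ≤ 1 :=
    aux_prod_le_one' _ (fun q hq => hW2 q (Finset.mem_sdiff.mp hq).1)
  have h0 : (0:ℝ) < ∏ q ∈ W \ m.primeFactors, (1 - 1/(q:ℝ)) :=
    aux_prod_pos' _ (fun q hq => hW2 q (Finset.mem_sdiff.mp hq).1)
  have h2 : (0:ℝ) < ∏ q ∈ m.primeFactors, (1 - 1/(q:ℝ)) :=
    aux_prod_pos' _ (aux_pf_two_le m)
  have hm : (0:ℝ) ≤ (m:ℝ) := Nat.cast_nonneg m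
  have := mul_le_of_le_one_left h2.le h1
  exact mul_le_mul_of_nonneg_left this hm





lemma aux_sol (p a : ℕ) (b : ℤ) (hp : p.Prime) (hpa : ¬ p ∣ a) :
    ∃ c : ℕ, ∀ n : ℕ, n ≡ c [MOD p] → (p:ℤ) ∣ (a:ℤ) * n + b := by
  haveI := Fact.mk hp
  have ha : (a : ZMod p) ≠ 0 := by
    rw [Ne, ZMod.natCast_eq_zero_iff]
    exact hpa
  refine ⟨((-(b : ZMod p)) * (a : ZMod p)⁻¹).val, fun n hn => ?_⟩
  rw [← ZMod.intCast_zmod_eq_zero_iff_dvd]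
  push_cast
  have hn' : (n : ZMod p) = (-(b : ZMod p)) * (a : ZMod p)⁻¹ := by
    have h2 := (ZMod.natCast_eq_natCast_iff _ _ _).mpr hn
    rw [h2, ZMod.natCast_val, ZMod.cast_id]
  rw [hn']
  have : (a : ZMod p) * ((-(b:ZMod p)) * (a:ZMod p)⁻¹)
      = -(b : ZMod p) * ((a : ZMod p) * (a:ZMod p)⁻¹) := by ring
  rw [this, mul_inv_cancel₀ ha, mul_one]
  ring

noncomputable def pickQ (ε : ℝ) (E : Finset ℕ) (G : ℕ) : Finset ℕ :=
  if hε : 0 < ε then (aux_prime_set_small ε hε E G).choose else ∅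

lemma pickQ_spec (ε : ℝ) (hε : 0 < ε) (E : Finset ℕ) (G : ℕ) :
    (∀ p ∈ pickQ ε E G, p.Prime ∧ G < p ∧ p ∉ E) ∧
      ∏ p ∈ pickQ ε E G, (1 - 1/(p:ℝ)) < ε := by
  rw [pickQ, dif_pos hε]
  exact (aux_prime_set_small ε hε E G).choose_spec

noncomputable def Frec (ρ : ℝ) (G : ℕ) : ℕ → Finset ℕ × Finset ℕ
  | 0 => (∅, ∅)
  | j+1 =>
      let prev := Frec ρ G j
      let Q := pickQ (ρ * ∏ p ∈ prev.1, (1 - 1/(p:ℝ))) prev.2 G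
      (Q, prev.2 ∪ Q)

lemma Frec_invariant (ρ : ℝ) (hρ : 0 < ρ) (G : ℕ) (j : ℕ) :
    (∀ p ∈ (Frec ρ G j).2, p.Prime ∧ G < p) ∧ (Frec ρ G j).1 ⊆ (Frec ρ G j).2 := by
  induction j with
  | zero => simp [Frec]
  | succ j ih =>
    obtain ⟨ih1, ih2⟩ := ih
    have hpos : 0 < ρ * ∏ p ∈ (Frec ρ G j).1, (1 - 1/(p:ℝ)) := by
      apply mul_pos hρ
      apply Finset.prod_pos
      intro q hq
      have h2 : 2 ≤ q := (ih1 q (ih2 hq)).1.two_le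
      have : (2:ℝ) ≤ (q:ℝ) := by exact_mod_cast h2
      have : 1/(q:ℝ) ≤ 1/2 := by apply div_le_div_of_nonneg_left <;> linarith
      linarith
    have hspec := pickQ_spec _ hpos (Frec ρ G j).2 G
    constructor
    · intro p hp
      simp only [Frec, Finset.mem_union] at hp
      rcases hp with hp | hp
      · exact ih1 p hp
      · exact ⟨(hspec.1 p hp).1, (hspec.1 p hp).2.1⟩
    · intro p hp
      simp only [Frec, Finset.mem_union]
      simp only [Frec] at hp
      exact Or.inr hp

lemma Frec_acc_mono (ρ : ℝ) (G : ℕ) {i j : ℕ} (h : i ≤ j) :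
    (Frec ρ G i).2 ⊆ (Frec ρ G j).2 := by
  induction j with
  | zero => cases Nat.le_zero.mp h; exact subset_rfl
  | succ j ih =>
    rcases Nat.lt_or_ge i (j+1) with h' | h'
    · refine subset_trans (ih (by omega)) ?_
      simp only [Frec]
      exact Finset.subset_union_left
    · have : i = j + 1 := by omega
      subst this; exact subset_rfl

lemma Frec_new_disjoint (ρ : ℝ) (hρ : 0 < ρ) (G : ℕ) (j : ℕ) :
    Disjoint (Frec ρ G (j+1)).1 (Frec ρ G j).2 := by
  have hinv := Frec_invariant ρ hρ G j
  have hpos : 0 < ρ * ∏ p ∈ (Frec ρ G j).1, (1 - 1/(p:ℝ)) := by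
    apply mul_pos hρ
    apply Finset.prod_pos
    intro q hq
    have h2 : 2 ≤ q := (hinv.1 q (hinv.2 hq)).1.two_le
    have : (2:ℝ) ≤ (q:ℝ) := by exact_mod_cast h2
    have : 1/(q:ℝ) ≤ 1/2 := by apply div_le_div_of_nonneg_left <;> linarith
    linarith
  have hspec := pickQ_spec _ hpos (Frec ρ G j).2 G
  rw [Finset.disjoint_left]
  intro p hp
  exact (hspec.1 p hp).2.2

lemma Frec_prod_lt (ρ : ℝ) (hρ : 0 < ρ) (G : ℕ) (j : ℕ) :
    ∏ p ∈ (Frec ρ G (j+1)).1, (1 - 1/(p:ℝ))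
      < ρ * ∏ p ∈ (Frec ρ G j).1, (1 - 1/(p:ℝ)) := by
  have hinv := Frec_invariant ρ hρ G j
  have hpos : 0 < ρ * ∏ p ∈ (Frec ρ G j).1, (1 - 1/(p:ℝ)) := by
    apply mul_pos hρ
    apply Finset.prod_pos
    intro q hq
    have h2 : 2 ≤ q := (hinv.1 q (hinv.2 hq)).1.two_le
    have : (2:ℝ) ≤ (q:ℝ) := by exact_mod_cast h2
    have : 1/(q:ℝ) ≤ 1/2 := by apply div_le_div_of_nonneg_left <;> linarith
    linarith
  exact (pickQ_spec _ hpos (Frec ρ G j).2 G).2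

lemma Frec_pairwise_disjoint (ρ : ℝ) (hρ : 0 < ρ) (G : ℕ) {i j : ℕ} (h : i < j) :
    Disjoint (Frec ρ G i).1 (Frec ρ G j).1 := by
  obtain ⟨j', rfl⟩ : ∃ j', j = j' + 1 := ⟨j - 1, by omega⟩
  have h1 : (Frec ρ G i).1 ⊆ (Frec ρ G j').2 :=
    subset_trans (Frec_invariant ρ hρ G i).2 (Frec_acc_mono ρ G (by omega))
  exact (Finset.disjoint_of_subset_right h1 (Frec_new_disjoint ρ hρ G j')).symm
open scoped Classical in
/-- The lower density of a set of positive integers: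
`liminf_{x→∞} #{n ∈ S : n ≤ x} / x`. -/
noncomputable def lowerDensity (S : Set ℕ) : ℝ :=
  Filter.atTop.liminf fun x : ℕ =>
    (((Finset.Icc 1 x).filter (fun n => n ∈ S)).card : ℝ) / x

theorem decreasing_totient_values
    (k : ℕ) (hk : 2 ≤ k) (a : ℕ → ℕ) (b : ℕ → ℤ)
    (ha : ∀ i, i < k → 0 < a i)
    (hab : ∀ i j, i < j → j < k → (a i : ℤ) * b j ≠ (a j : ℤ) * b i) :
    0 < lowerDensity {n : ℕ | 0 < n ∧
      (∀ j, j < k → 0 < (a j : ℤ) * (n : ℤ) + b j) ∧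
      (∀ j, j + 1 < k →
        ((a j : ℤ) * (n : ℤ) + b j).toNat.totient >
          ((a (j+1) : ℤ) * (n : ℤ) + b (j+1)).toNat.totient)} := by
  classical
  set S : Set ℕ := {n : ℕ | 0 < n ∧
      (∀ j, j < k → 0 < (a j : ℤ) * (n : ℤ) + b j) ∧
      (∀ j, j + 1 < k →
        ((a j : ℤ) * (n : ℤ) + b j).toNat.totient >
          ((a (j+1) : ℤ) * (n : ℤ) + b (j+1)).toNat.totient)} with hS_def
  -- constants
  set amax := ∑ i ∈ Finset.range k, a i with hamax_def
  set bB := ∑ i ∈ Finset.range k, (b i).natAbs with hbB_def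
  set A0 := ∏ i ∈ Finset.range k, a i with hA0_def
  have hA0pos : 0 < A0 := Finset.prod_pos (fun i hi => ha i (Finset.mem_range.mp hi))
  have hamax_ge : ∀ i, i < k → a i ≤ amax := fun i hi =>
    Finset.single_le_sum (fun j _ => Nat.zero_le _) (Finset.mem_range.mpr hi)
  have hamax_pos : 0 < amax := lt_of_lt_of_le (ha 0 (by omega)) (hamax_ge 0 (by omega))
  have hbB_ge : ∀ i, i < k → (b i).natAbs ≤ bB := fun i hi =>
    Finset.single_le_sum (f := fun i => (b i).natAbs) (fun j _ => Nat.zero_le _)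
      (Finset.mem_range.mpr hi)
  have haA0 : ∀ i, i < k → a i ∣ A0 := fun i hi =>
    Finset.dvd_prod_of_mem _ (Finset.mem_range.mpr hi)
  set G := A0 + amax +
      ∑ i ∈ Finset.range k, ∑ j ∈ Finset.range k, ((a i:ℤ) * b j - (a j:ℤ) * b i).natAbs
    with hG_def
  have hG_res : ∀ i j, i < k → j < k → ((a i:ℤ) * b j - (a j:ℤ) * b i).natAbs ≤ G := by
    intro i j hi hj
    have h1 : ((a i:ℤ) * b j - (a j:ℤ) * b i).natAbs
        ≤ ∑ j' ∈ Finset.range k, ((a i:ℤ) * b j' - (a j':ℤ) * b i).natAbs :=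
      Finset.single_le_sum (f := fun j' => ((a i:ℤ) * b j' - (a j':ℤ) * b i).natAbs)
        (fun _ _ => Nat.zero_le _) (Finset.mem_range.mpr hj)
    have h2 : (∑ j' ∈ Finset.range k, ((a i:ℤ)*b j' - (a j':ℤ)*b i).natAbs)
        ≤ ∑ i' ∈ Finset.range k, ∑ j' ∈ Finset.range k, ((a i':ℤ)*b j' - (a j':ℤ)*b i').natAbs :=
      Finset.single_le_sum
        (f := fun i' => ∑ j' ∈ Finset.range k, ((a i':ℤ)*b j' - (a j':ℤ)*b i').natAbs)
        (fun _ _ => Nat.zero_le _) (Finset.mem_range.mpr hi)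
    omega
  have hG_amax : amax ≤ G := by omega
  have hG_A0 : A0 ≤ G := by omega
  -- analytic constants
  set T : ℝ := 4 * k with hT_def
  have hTpos : (0:ℝ) < T := by
    have : (0:ℝ) < (k:ℝ) := by exact_mod_cast (by omega : 0 < k)
    rw [hT_def]; linarith
  set η : ℝ := Real.exp (-2 * T) with hη_def
  have hηpos : 0 < η := Real.exp_pos _
  have hη_le_one : η ≤ 1 := by
    rw [hη_def]
    calc Real.exp (-2*T) ≤ Real.exp 0 := Real.exp_le_exp.mpr (by linarith)
      _ = 1 := Real.exp_zero
  set c₀ : ℝ := ∏ p ∈ A0.primeFactors, (1 - 1/(p:ℝ)) with hc₀_def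
  have hc₀pos : 0 < c₀ := aux_prod_pos' _ (aux_pf_two_le A0)
  have hc₀le : c₀ ≤ 1 := aux_prod_le_one' _ (aux_pf_two_le A0)
  set ρ : ℝ := c₀ * η / (4 * amax) with hρ_def
  have hamaxR : (0:ℝ) < (amax:ℝ) := by exact_mod_cast hamax_pos
  have hρpos : 0 < ρ := by rw [hρ_def]; positivity
  -- prime sets
  set P : ℕ → Finset ℕ := fun j => (Frec ρ G j).1 with hP_def
  set δ : ℕ → ℝ := fun j => ∏ p ∈ P j, (1 - 1/(p:ℝ)) with hδ_def
  have hP_prime : ∀ j, ∀ p ∈ P j, p.Prime ∧ G < p := fun j p hp =>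
    (Frec_invariant ρ hρpos G j).1 p ((Frec_invariant ρ hρpos G j).2 hp)
  have hP_two : ∀ j, ∀ p ∈ P j, 2 ≤ p := fun j p hp => (hP_prime j p hp).1.two_le
  have hδpos : ∀ j, 0 < δ j := fun j => aux_prod_pos' _ (hP_two j)
  have hδle1 : ∀ j, δ j ≤ 1 := fun j => aux_prod_le_one' _ (hP_two j)
  have hδlt : ∀ j, δ (j+1) < ρ * δ j := fun j => Frec_prod_lt ρ hρpos G j
  have hP_disj : ∀ i j, i ≠ j → Disjoint (P i) (P j) := by
    intro i j hij
    rcases Nat.lt_or_ge i j with h | h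
    · exact Frec_pairwise_disjoint ρ hρpos G h
    · exact (Frec_pairwise_disjoint ρ hρpos G (by omega : j < i)).symm
  set Pall := (Finset.range k).biUnion P with hPall_def
  have hPall_prime : ∀ p ∈ Pall, p.Prime ∧ G < p := by
    intro p hp
    obtain ⟨j, _, hpj⟩ := Finset.mem_biUnion.mp hp
    exact hP_prime j p hpj
  set M := ∏ p ∈ Pall, p with hM_def
  have hMpos : 0 < M := Finset.prod_pos (fun p hp => (hPall_prime p hp).1.pos)
  have hPM : ∀ j, j < k → ∀ p ∈ P j, p ∣ M := by
    intro j hj p hp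
    exact Finset.dvd_prod_of_mem _ (Finset.mem_biUnion.mpr ⟨j, Finset.mem_range.mpr hj, hp⟩)
  -- residues and CRT
  have hJex : ∀ p ∈ Pall, ∃ j, j < k ∧ p ∈ P j := by
    intro p hp
    obtain ⟨j, hj, hpj⟩ := Finset.mem_biUnion.mp hp
    exact ⟨j, Finset.mem_range.mp hj, hpj⟩
  set J : ℕ → ℕ := fun p => if h : ∃ j, j < k ∧ p ∈ P j then h.choose else 0 with hJ_def
  have hJ_spec : ∀ p ∈ Pall, J p < k ∧ p ∈ P (J p) := by
    intro p hp
    have h := hJex p hp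
    simp only [hJ_def, dif_pos h]
    exact h.choose_spec
  have hJ_eq : ∀ p ∈ Pall, ∀ j, j < k → p ∈ P j → J p = j := by
    intro p hp j hj hpj
    by_contra hne
    exact (Finset.disjoint_left.mp (hP_disj _ _ hne) (hJ_spec p hp).2) hpj
  have hnotdvd_a : ∀ p ∈ Pall, ∀ j, j < k → ¬ p ∣ a j := by
    intro p hp j hj hdvd
    have h1 : p ≤ a j := Nat.le_of_dvd (ha j hj) hdvd
    have h2 : a j ≤ amax := hamax_ge j hj
    have := (hPall_prime p hp).2
    omega
  set c : ℕ → ℕ := fun p =>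
    if h : p.Prime ∧ ¬ p ∣ a (J p) then (aux_sol p (a (J p)) (b (J p)) h.1 h.2).choose
    else 0 with hc_def
  have hc_spec : ∀ p ∈ Pall, ∀ n : ℕ, n ≡ c p [MOD p] →
      (p:ℤ) ∣ (a (J p):ℤ) * n + b (J p) := by
    intro p hp n hn
    have hcond : p.Prime ∧ ¬ p ∣ a (J p) :=
      ⟨(hPall_prime p hp).1, hnotdvd_a p hp (J p) (hJ_spec p hp).1⟩
    rw [hc_def] at hn
    simp only [dif_pos hcond] at hn
    exact (aux_sol p (a (J p)) (b (J p)) hcond.1 hcond.2).choose_spec n hn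
  obtain ⟨r, hr⟩ : ∃ r : ℕ, ∀ p ∈ Pall, r ≡ c p [MOD p] := by
    have hs : ∀ p ∈ Pall, (id p : ℕ) ≠ 0 := fun p hp => (hPall_prime p hp).1.pos.ne'
    have pp : (↑Pall : Set ℕ).Pairwise (Function.onFun Nat.Coprime id) := by
      intro p hp q hq hpq
      exact (Nat.coprime_primes (hPall_prime p (by exact_mod_cast hp)).1
        (hPall_prime q (by exact_mod_cast hq)).1).mpr hpq
    obtain ⟨r, hr⟩ := Nat.chineseRemainderOfFinset c id Pall hs pp
    exact ⟨r, hr⟩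
  -- key divisibility facts
  have hK1 : ∀ n : ℕ, n ≡ r [MOD M] → ∀ j, j < k → ∀ p ∈ P j,
      (p:ℤ) ∣ (a j:ℤ) * n + b j := by
    intro n hn j hj p hp
    have hpall : p ∈ Pall := Finset.mem_biUnion.mpr ⟨j, Finset.mem_range.mpr hj, hp⟩
    have hnp : n ≡ r [MOD p] := hn.of_dvd (hPM j hj p hp)
    have hncp : n ≡ c p [MOD p] := hnp.trans (hr p hpall)
    have := hc_spec p hpall n hncp
    rwa [hJ_eq p hpall j hj hp] at this
  have hK2 : ∀ n : ℕ, n ≡ r [MOD M] → ∀ i j, i < k → j < k → i ≠ j → ∀ p ∈ P i,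
      ¬ ((p:ℤ) ∣ (a j:ℤ) * n + b j) := by
    intro n hn i j hi hj hij p hp hdvd
    have h1 : (p:ℤ) ∣ (a i:ℤ) * n + b i := hK1 n hn i hi p hp
    have h2 : (p:ℤ) ∣ (a j:ℤ) * ((a i:ℤ) * n + b i) - (a i:ℤ) * ((a j:ℤ) * n + b j) :=
      dvd_sub (Dvd.dvd.mul_left h1 _) (Dvd.dvd.mul_left hdvd _)
    have h3 : (a j:ℤ) * ((a i:ℤ) * n + b i) - (a i:ℤ) * ((a j:ℤ) * n + b j)
        = (a j:ℤ) * b i - (a i:ℤ) * b j := by ring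
    rw [h3] at h2
    have hD : (a j:ℤ) * b i - (a i:ℤ) * b j ≠ 0 := by
      rcases Nat.lt_or_ge i j with h | h
      · intro heq
        exact hab i j h hj (by linarith [sub_eq_zero.mp heq])
      · intro heq
        exact hab j i (by omega) hi (by linarith [sub_eq_zero.mp heq])
    have h4 : p ∣ ((a j:ℤ) * b i - (a i:ℤ) * b j).natAbs := by
      have := Int.natAbs_dvd_natAbs.mpr h2
      simpa using this
    have h5 : p ≤ ((a j:ℤ) * b i - (a i:ℤ) * b j).natAbs :=
      Nat.le_of_dvd (Int.natAbs_pos.mpr hD) h4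
    have h6 := hG_res j i hj hi
    have := (hP_prime i p hp).2
    omega
  -- linear forms
  set n₀ := 2 * bB + 2 with hn₀_def
  set N : ℕ → ℕ → ℕ := fun j n => ((a j:ℤ) * n + b j).toNat with hN_def
  have hb_abs : ∀ j, j < k → -(bB:ℤ) ≤ b j ∧ b j ≤ (bB:ℤ) := by
    intro j hj
    have := hbB_ge j hj
    omega
  have hform_ge : ∀ j, j < k → ∀ n : ℕ, (n:ℤ) - bB ≤ (a j:ℤ) * n + b j := by
    intro j hj n
    have h1 : (1:ℤ) ≤ (a j : ℤ) := by exact_mod_cast ha j hj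
    have h2 : (n:ℤ) ≤ (a j:ℤ) * n := le_mul_of_one_le_left (by positivity) h1
    have h3 := (hb_abs j hj).1
    linarith
  have hform_pos : ∀ j, j < k → ∀ n : ℕ, n₀ ≤ n → 0 < (a j:ℤ) * n + b j := by
    intro j hj n hn
    have h1 := hform_ge j hj n
    have h2 : (n₀:ℤ) ≤ (n:ℤ) := by exact_mod_cast hn
    have h3 : (n₀:ℤ) = 2*bB+2 := by rw [hn₀_def]; push_cast; ring
    linarith
  have hN_cast : ∀ j, j < k → ∀ n : ℕ, n₀ ≤ n → (N j n : ℤ) = (a j:ℤ) * n + b j := by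
    intro j hj n hn
    exact Int.toNat_of_nonneg (le_of_lt (hform_pos j hj n hn))
  have hN_posnat : ∀ j, j < k → ∀ n : ℕ, n₀ ≤ n → 0 < N j n := by
    intro j hj n hn
    have h := hform_pos j hj n hn
    have := hN_cast j hj n hn
    omega
  have hN_lb : ∀ j, j < k → ∀ n : ℕ, n₀ ≤ n → (n:ℝ)/2 ≤ (N j n : ℝ) := by
    intro j hj n hn
    have h1 := hform_ge j hj n
    have h2 := hN_cast j hj n hn
    have h3 : (n₀:ℤ) ≤ (n:ℤ) := by exact_mod_cast hn
    have h4 : (n₀:ℤ) = 2*bB+2 := by rw [hn₀_def]; push_cast; ring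
    have h5 : (n:ℤ) ≤ 2 * (N j n : ℤ) := by omega
    have h6 : (n:ℝ) ≤ 2 * (N j n : ℝ) := by exact_mod_cast h5
    linarith
  have hN_ub_int : ∀ j, j < k → ∀ n : ℕ, n₀ ≤ n → (N j n : ℤ) ≤ (amax:ℤ) * n + bB := by
    intro j hj n hn
    have h2 := hN_cast j hj n hn
    have h3 : (a j:ℤ) ≤ (amax:ℤ) := by exact_mod_cast hamax_ge j hj
    have h4 := (hb_abs j hj).2
    have h5 : (0:ℤ) ≤ (n:ℤ) := by positivity
    have h6 : (a j:ℤ) * n ≤ (amax:ℤ) * n := by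
      apply mul_le_mul_of_nonneg_right h3 h5
    omega
  have hN_ub2 : ∀ j, j < k → ∀ n : ℕ, n₀ ≤ n → (N j n : ℝ) ≤ 2 * amax * n := by
    intro j hj n hn
    have h1 := hN_ub_int j hj n hn
    have h2 : (bB:ℤ) ≤ (n:ℤ) := by
      have : (n₀:ℤ) ≤ (n:ℤ) := by exact_mod_cast hn
      have h4 : (n₀:ℤ) = 2*bB+2 := by rw [hn₀_def]; push_cast; ring
      omega
    have h3 : (1:ℤ) ≤ (amax:ℤ) := by exact_mod_cast hamax_pos
    have h5 : (0:ℤ) ≤ (n:ℤ) := by positivity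
    have h4 : (n:ℤ) ≤ (amax:ℤ) * n := le_mul_of_one_le_left h5 h3
    have h6 : (N j n : ℤ) ≤ 2 * amax * n := by linarith
    exact_mod_cast h6
  have hN_ubN : ∀ j, j < k → ∀ n : ℕ, n₀ ≤ n → N j n ≤ amax * n + bB := by
    intro j hj n hn
    have h1 := hN_ub_int j hj n hn
    omega
  -- excluded primes and the sums X j n
  set EX := Pall ∪ A0.primeFactors with hEX_def
  have hPallEX : Pall ⊆ EX := Finset.subset_union_left
  have hA0EX : A0.primeFactors ⊆ EX := Finset.subset_union_right
  set X : ℕ → ℕ → ℝ := fun j n => ∑ q ∈ (N j n).primeFactors \ EX, (1:ℝ)/q with hX_def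
  have hXnonneg : ∀ j n, 0 ≤ X j n := by
    intro j n
    apply Finset.sum_nonneg
    intro q _
    positivity
  -- dvd transfer
  have hdvd_iff : ∀ j, j < k → ∀ n : ℕ, n₀ ≤ n → ∀ p : ℕ,
      (p ∣ N j n ↔ (p:ℤ) ∣ (a j:ℤ) * n + b j) := by
    intro j hj n hn p
    rw [← hN_cast j hj n hn]
    exact_mod_cast (Int.natCast_dvd_natCast (m := p) (n := N j n)).symm
  -- totient upper bound along the progression
  have hUpper : ∀ n : ℕ, n₀ ≤ n → n ≡ r [MOD M] → ∀ j, j < k →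
      ((N j n).totient : ℝ) ≤ (N j n : ℝ) * δ j := by
    intro n hn hnr j hj
    apply aux_totient_upper
    intro p hp
    refine Nat.mem_primeFactors.mpr ⟨(hP_prime j p hp).1, ?_, (hN_posnat j hj n hn).ne'⟩
    exact (hdvd_iff j hj n hn p).mpr (hK1 n hnr j hj p hp)
  -- totient lower bound along the progression
  have hLower : ∀ n : ℕ, n₀ ≤ n → n ≡ r [MOD M] → ∀ j, j < k → X j n ≤ T →
      (N j n : ℝ) * (δ j * c₀ * η) ≤ ((N j n).totient : ℝ) := by
    intro n hn hnr j hj hXT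
    set R := (N j n).primeFactors \ EX with hR_def
    set W := (P j ∪ A0.primeFactors) ∪ R with hW_def
    have hWpf : (N j n).primeFactors ⊆ W := by
      intro q hq
      by_cases hqEX : q ∈ EX
      · rcases Finset.mem_union.mp hqEX with hqP | hqA
        · obtain ⟨i, hik, hqi⟩ := hJex q hqP
          have hij : i = j := by
            by_contra hne
            exact hK2 n hnr i j hik hj hne q hqi
              ((hdvd_iff j hj n hn q).mp (Nat.dvd_of_mem_primeFactors hq))
          subst hij
          exact Finset.mem_union.mpr (Or.inl (Finset.mem_union.mpr (Or.inl hqi)))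
        · exact Finset.mem_union.mpr (Or.inl (Finset.mem_union.mpr (Or.inr hqA)))
      · exact Finset.mem_union.mpr (Or.inr (Finset.mem_sdiff.mpr ⟨hq, hqEX⟩))
    have hR2 : ∀ q ∈ R, 2 ≤ q := fun q hq =>
      (Nat.prime_of_mem_primeFactors (Finset.mem_sdiff.mp hq).1).two_le
    have hW2 : ∀ q ∈ W, 2 ≤ q := by
      intro q hq
      rcases Finset.mem_union.mp hq with hq' | hq'
      · rcases Finset.mem_union.mp hq' with h | h
        · exact hP_two j q h
        · exact (Nat.prime_of_mem_primeFactors h).two_le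
      · exact hR2 q hq'
    have hdisj1 : Disjoint (P j) A0.primeFactors := by
      rw [Finset.disjoint_left]
      intro p hp hpA
      have h1 := (hP_prime j p hp).2
      have h2 := Nat.le_of_mem_primeFactors hpA
      omega
    have hdisj2 : Disjoint (P j ∪ A0.primeFactors) R := by
      rw [Finset.disjoint_left]
      intro p hp hpR
      have := (Finset.mem_sdiff.mp hpR).2
      rcases Finset.mem_union.mp hp with h | h
      · exact this (hPallEX (Finset.mem_biUnion.mpr ⟨j, Finset.mem_range.mpr hj, h⟩))
      · exact this (hA0EX h)
    have hprod_split : ∏ p ∈ W, (1 - 1/(p:ℝ)) = δ j * c₀ * ∏ p ∈ R, (1 - 1/(p:ℝ)) := by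
      rw [hW_def, Finset.prod_union hdisj2, Finset.prod_union hdisj1]
    have hprodR : η ≤ ∏ p ∈ R, (1 - 1/(p:ℝ)) := by
      calc η = Real.exp (-2 * T) := by rw [hη_def]
        _ ≤ Real.exp (-2 * X j n) := Real.exp_le_exp.mpr (by nlinarith)
        _ ≤ ∏ p ∈ R, (1 - 1/(p:ℝ)) := by
            have := aux_exp_le_prod R hR2
            rw [hX_def] at *
            exact this
    have hlow := aux_totient_lower (N j n) W hWpf hW2
    rw [hprod_split] at hlow
    calc (N j n : ℝ) * (δ j * c₀ * η)
        ≤ (N j n : ℝ) * (δ j * c₀ * ∏ p ∈ R, (1 - 1/(p:ℝ))) := by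
          apply mul_le_mul_of_nonneg_left _ (Nat.cast_nonneg _)
          apply mul_le_mul_of_nonneg_left hprodR
          exact mul_nonneg (hδpos j).le hc₀pos.le
      _ ≤ ((N j n).totient : ℝ) := hlow
  -- membership in S
  have hOrder : ∀ n : ℕ, n₀ ≤ n → n ≡ r [MOD M] → (∀ j, j < k → X j n ≤ T) → n ∈ S := by
    intro n hn hnr hXT
    rw [hS_def, Set.mem_setOf_eq]
    refine ⟨by omega, fun j hj => hform_pos j hj n hn, fun j hjk => ?_⟩
    have hj : j < k := by omega
    have hj1 : j + 1 < k := hjk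
    have key : ((N (j+1) n).totient : ℝ) < ((N j n).totient : ℝ) := by
      have hNpos1 : (0:ℝ) < (N (j+1) n : ℝ) := by
        exact_mod_cast hN_posnat (j+1) hj1 n hn
      have c1 : ((N (j+1) n).totient : ℝ) ≤ (N (j+1) n : ℝ) * δ (j+1) :=
        hUpper n hn hnr (j+1) hj1
      have c2 : (N (j+1) n : ℝ) * δ (j+1) < (N (j+1) n : ℝ) * (ρ * δ j) := by
        apply mul_lt_mul_of_pos_left (hδlt j) hNpos1
      have c3 : (N (j+1) n : ℝ) * (ρ * δ j) ≤ (2 * amax * n) * (ρ * δ j) := by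
        apply mul_le_mul_of_nonneg_right (hN_ub2 (j+1) hj1 n hn)
        exact mul_nonneg hρpos.le (hδpos j).le
      have c4 : (2 * (amax:ℝ) * n) * (ρ * δ j) = ((n:ℝ)/2) * (δ j * c₀ * η) := by
        rw [hρ_def]
        field_simp
        ring
      have c5 : ((n:ℝ)/2) * (δ j * c₀ * η) ≤ (N j n : ℝ) * (δ j * c₀ * η) := by
        apply mul_le_mul_of_nonneg_right (hN_lb j hj n hn)
        have := hδpos j
        positivity
      have c6 : (N j n : ℝ) * (δ j * c₀ * η) ≤ ((N j n).totient : ℝ) :=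
        hLower n hn hnr j hj (hXT j hj)
      linarith
    have keyN : (N (j+1) n).totient < (N j n).totient := by exact_mod_cast key
    exact keyN
  -- counting stage
  set C := amax + bB + 1 with hC_def
  have hn₀1 : 1 ≤ n₀ := by omega
  have main_count : ∀ x : ℕ, n₀ ≤ x →
      (x:ℝ)/M - n₀ - 1 - (k:ℝ) * (((x:ℝ)/M + 2*Real.sqrt ((C*x : ℕ):ℝ))/T)
        ≤ (((Finset.Icc 1 x).filter (fun n => n ∈ S)).card : ℝ) := by
    intro x hx
    have hx1 : 1 ≤ x := le_trans hn₀1 hx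
    set Ax := (Finset.Ioc (n₀-1) x).filter (· ≡ r [MOD M]) with hAx_def
    have hAx_mem : ∀ n ∈ Ax, n₀ ≤ n ∧ n ≤ x ∧ n ≡ r [MOD M] := by
      intro n hn
      obtain ⟨hn1, hn2⟩ := Finset.mem_filter.mp hn
      obtain ⟨hn3, hn4⟩ := Finset.mem_Ioc.mp hn1
      exact ⟨by omega, hn4, hn2⟩
    have hAx_sub : Ax ⊆ Finset.Icc 1 x := by
      intro n hn
      obtain ⟨h1, h2, _⟩ := hAx_mem n hn
      exact Finset.mem_Icc.mpr ⟨by omega, h2⟩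
    have cardA : (x:ℝ)/M - n₀ - 1 ≤ (Ax.card : ℝ) := aux_card_residue_lower M x n₀ r hMpos
    set U := (Finset.range (C*x+1)).filter (fun q => q.Prime ∧ q ∉ EX) with hU_def
    have hU_mem : ∀ q ∈ U, q.Prime ∧ q ∉ EX ∧ q ≤ C*x := by
      intro q hq
      obtain ⟨h1, h2, h3⟩ := Finset.mem_filter.mp hq
      exact ⟨h2, h3, by have := Finset.mem_range.mp h1; omega⟩
    have hU2 : ∀ q ∈ U, 2 ≤ q := fun q hq => (hU_mem q hq).1.two_le
    -- the average bound for each j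
    have hsum : ∀ j, j < k → ∑ n ∈ Ax, X j n ≤ (x:ℝ)/M + 2*Real.sqrt ((C*x : ℕ):ℝ) := by
      intro j hj
      have hFU : ∀ n ∈ Ax, (N j n).primeFactors \ EX ⊆ U := by
        intro n hn q hq
        obtain ⟨hn₀n, hnx, _⟩ := hAx_mem n hn
        obtain ⟨hqpf, hqEX⟩ := Finset.mem_sdiff.mp hq
        refine Finset.mem_filter.mpr ⟨Finset.mem_range.mpr ?_, Nat.prime_of_mem_primeFactors hqpf, hqEX⟩
        have h1 : q ≤ N j n := Nat.le_of_mem_primeFactors hqpf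
        have h2 : N j n ≤ amax * n + bB := hN_ubN j hj n hn₀n
        have h3 : amax * n ≤ amax * x := Nat.mul_le_mul_left amax hnx
        have h4 : bB ≤ bB * x := Nat.le_mul_of_pos_right bB (by omega)
        have h5 : C*x = amax*x + bB*x + x := by rw [hC_def]; ring
        omega
      have hswap := aux_swap Ax U (fun n => (N j n).primeFactors \ EX)
        (fun q => (1:ℝ)/q) hFU
      have hXsum : ∑ n ∈ Ax, X j n
          = ∑ q ∈ U, ((Ax.filter (fun n => q ∈ (N j n).primeFactors \ EX)).card : ℝ) * (1/(q:ℝ)) := by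
        rw [hX_def]; exact hswap
      rw [hXsum]
      have hterm : ∀ q ∈ U,
          ((Ax.filter (fun n => q ∈ (N j n).primeFactors \ EX)).card : ℝ) * (1/(q:ℝ))
            ≤ ((x:ℝ)/M) * (1/(q:ℝ)^2) + 1/(q:ℝ) := by
        intro q hq
        obtain ⟨hqp, hqEX, hqle⟩ := hU_mem q hq
        have hq2 : (2:ℝ) ≤ (q:ℝ) := by exact_mod_cast hqp.two_le
        have hq0 : (0:ℝ) < (q:ℝ) := by linarith
        have hqa : ¬ q ∣ a j := by
          intro hdvd
          apply hqEX
          apply hA0EX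
          exact Nat.mem_primeFactors.mpr ⟨hqp, dvd_trans hdvd (haA0 j hj), hA0pos.ne'⟩
        have hcop : Nat.Coprime M q := by
          apply Nat.Coprime.prod_left
          intro p hp
          have hpq : p ≠ q := by
            intro heq
            exact hqEX (hPallEX (heq ▸ hp))
          exact (Nat.coprime_primes (hPall_prime p hp).1 hqp).mpr hpq
        have hMq : 0 < M * q := Nat.mul_pos hMpos hqp.pos
        have hcard : ((Ax.filter (fun n => q ∈ (N j n).primeFactors \ EX)).card : ℝ)
            ≤ (x:ℝ)/(M*q : ℕ) + 1 := by
          apply aux_card_modeq_upper x (M*q) hMq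
          · exact subset_trans (Finset.filter_subset _ _) hAx_sub
          · intro m hm n hn
            obtain ⟨hmA, hmq⟩ := Finset.mem_filter.mp hm
            obtain ⟨hnA, hnq⟩ := Finset.mem_filter.mp hn
            have hmr := (hAx_mem m hmA).2.2
            have hnr := (hAx_mem n hnA).2.2
            have hMeq : m ≡ n [MOD M] := hmr.trans hnr.symm
            have hqm : (q:ℤ) ∣ (a j:ℤ) * m + b j :=
              (hdvd_iff j hj m (hAx_mem m hmA).1 q).mp
                (Nat.dvd_of_mem_primeFactors (Finset.mem_sdiff.mp hmq).1)
            have hqn : (q:ℤ) ∣ (a j:ℤ) * n + b j :=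
              (hdvd_iff j hj n (hAx_mem n hnA).1 q).mp
                (Nat.dvd_of_mem_primeFactors (Finset.mem_sdiff.mp hnq).1)
            have hqmn : (q:ℤ) ∣ (a j:ℤ) * ((m:ℤ) - (n:ℤ)) := by
              have := dvd_sub hqm hqn
              have heq : ((a j:ℤ) * m + b j) - ((a j:ℤ) * n + b j) = (a j:ℤ)*((m:ℤ)-(n:ℤ)) := by
                ring
              rwa [heq] at this
            have hqprime : Prime (q:ℤ) := Nat.prime_iff_prime_int.mp hqp
            have hqdvd : (q:ℤ) ∣ (m:ℤ) - (n:ℤ) := by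
              rcases hqprime.dvd_mul.mp hqmn with h | h
              · exfalso
                exact hqa (Int.ofNat_dvd.mp h)
              · exact h
            have hQeq : m ≡ n [MOD q] := by
              rw [Nat.modEq_iff_dvd]
              exact dvd_sub_comm.mp hqdvd
            exact (Nat.modEq_and_modEq_iff_modEq_mul hcop).mp ⟨hMeq, hQeq⟩
        have hcast : ((M*q : ℕ):ℝ) = (M:ℝ)*(q:ℝ) := by push_cast; ring
        have hstep : ((x:ℝ)/(M*q:ℕ) + 1) * (1/(q:ℝ)) = ((x:ℝ)/M) * (1/(q:ℝ)^2) + 1/(q:ℝ) := by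
          rw [hcast]
          have hM0 : (0:ℝ) < (M:ℝ) := by exact_mod_cast hMpos
          field_simp
        calc ((Ax.filter (fun n => q ∈ (N j n).primeFactors \ EX)).card : ℝ) * (1/(q:ℝ))
            ≤ ((x:ℝ)/(M*q:ℕ) + 1) * (1/(q:ℝ)) := by
              apply mul_le_mul_of_nonneg_right hcard (by positivity)
          _ = ((x:ℝ)/M) * (1/(q:ℝ)^2) + 1/(q:ℝ) := hstep
      calc ∑ q ∈ U, ((Ax.filter (fun n => q ∈ (N j n).primeFactors \ EX)).card : ℝ) * (1/(q:ℝ))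
          ≤ ∑ q ∈ U, (((x:ℝ)/M) * (1/(q:ℝ)^2) + 1/(q:ℝ)) := Finset.sum_le_sum hterm
        _ = ((x:ℝ)/M) * (∑ q ∈ U, 1/(q:ℝ)^2) + ∑ q ∈ U, 1/(q:ℝ) := by
            rw [Finset.sum_add_distrib, Finset.mul_sum]
        _ ≤ ((x:ℝ)/M) * 1 + 2*Real.sqrt ((C*x:ℕ):ℝ) := by
            have h1 := aux_sq_sum U hU2
            have h2 := aux_harmonic U (C*x) (fun q hq => ⟨by have := hU2 q hq; omega, (hU_mem q hq).2.2⟩)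
            have hxM : (0:ℝ) ≤ (x:ℝ)/M := by positivity
            have := mul_le_mul_of_nonneg_left h1 hxM
            linarith
        _ = (x:ℝ)/M + 2*Real.sqrt ((C*x:ℕ):ℝ) := by ring
    -- Markov
    set bad : ℕ → Finset ℕ := fun j => Ax.filter (fun n => T < X j n) with hbad_def
    have hbad_card : ∀ j, j < k → ((bad j).card : ℝ) ≤ ((x:ℝ)/M + 2*Real.sqrt ((C*x:ℕ):ℝ))/T := by
      intro j hj
      have h1 := aux_markov Ax (X j) (fun n _ => hXnonneg j n) T hTpos
      have h2 := hsum j hj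
      calc ((bad j).card : ℝ) ≤ (∑ n ∈ Ax, X j n)/T := h1
        _ ≤ ((x:ℝ)/M + 2*Real.sqrt ((C*x:ℕ):ℝ))/T := by gcongr
    set good := Ax \ (Finset.range k).biUnion bad with hgood_def
    have hgood_S : ∀ n ∈ good, n ∈ S := by
      intro n hn
      obtain ⟨hnA, hnb⟩ := Finset.mem_sdiff.mp hn
      obtain ⟨hn₀n, hnx, hnr⟩ := hAx_mem n hnA
      apply hOrder n hn₀n hnr
      intro j hj
      by_contra hlt
      push_neg at hlt
      exact hnb (Finset.mem_biUnion.mpr ⟨j, Finset.mem_range.mpr hj,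
        Finset.mem_filter.mpr ⟨hnA, hlt⟩⟩)
    have hgood_sub : good ⊆ (Finset.Icc 1 x).filter (fun n => n ∈ S) := by
      intro n hn
      exact Finset.mem_filter.mpr ⟨hAx_sub (Finset.mem_sdiff.mp hn).1, hgood_S n hn⟩
    have hcard_good : (Ax.card : ℝ) - (k:ℝ) * (((x:ℝ)/M + 2*Real.sqrt ((C*x:ℕ):ℝ))/T)
        ≤ (good.card : ℝ) := by
      have h1 : Ax.card ≤ good.card + ((Finset.range k).biUnion bad).card :=
        Finset.card_le_card_sdiff_add_card
      have h2 : (((Finset.range k).biUnion bad).card : ℝ)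
          ≤ (k:ℝ) * (((x:ℝ)/M + 2*Real.sqrt ((C*x:ℕ):ℝ))/T) := by
        have h3 : ((Finset.range k).biUnion bad).card ≤ ∑ j ∈ Finset.range k, (bad j).card :=
          Finset.card_biUnion_le
        have h4 : (∑ j ∈ Finset.range k, ((bad j).card:ℝ))
            ≤ ∑ _j ∈ Finset.range k, (((x:ℝ)/M + 2*Real.sqrt ((C*x:ℕ):ℝ))/T) :=
          Finset.sum_le_sum (fun j hj => hbad_card j (Finset.mem_range.mp hj))
        rw [Finset.sum_const, nsmul_eq_mul, Finset.card_range] at h4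
        have h5 : (((Finset.range k).biUnion bad).card : ℝ)
            ≤ ∑ j ∈ Finset.range k, ((bad j).card:ℝ) := by exact_mod_cast h3
        linarith
      have h6 : (Ax.card : ℝ) ≤ (good.card:ℝ) + (((Finset.range k).biUnion bad).card : ℝ) := by
        exact_mod_cast h1
      linarith
    have hfinal : (good.card : ℝ) ≤ (((Finset.Icc 1 x).filter (fun n => n ∈ S)).card : ℝ) := by
      exact_mod_cast Finset.card_le_card hgood_sub
    linarith
  -- final assembly
  have hMR : (0:ℝ) < (M:ℝ) := by exact_mod_cast hMpos
  have hCpos : 0 < C := by omega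
  have hCR : (0:ℝ) < (C:ℝ) := by exact_mod_cast hCpos
  set D : ℝ := (n₀:ℝ) + 1 + (M:ℝ)*(C:ℝ)/2 with hD_def
  have hDpos : 0 < D := by
    have h1 : (0:ℝ) ≤ (n₀:ℝ) := Nat.cast_nonneg _
    have h2 : (0:ℝ) < (M:ℝ)*(C:ℝ)/2 := by positivity
    rw [hD_def]; linarith
  have hsqrt : ∀ x : ℕ, Real.sqrt ((C*x:ℕ):ℝ) ≤ (x:ℝ)/(4*M) + (M:ℝ)*(C:ℝ) := by
    intro x
    have hu : (0:ℝ) ≤ ((C*x:ℕ):ℝ) := Nat.cast_nonneg _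
    have ht : (0:ℝ) < 2*(M:ℝ)*(C:ℝ) := by positivity
    have hsq := sq_nonneg (Real.sqrt ((C*x:ℕ):ℝ) - 2*(M:ℝ)*(C:ℝ))
    have hss : Real.sqrt ((C*x:ℕ):ℝ) ^ 2 = ((C*x:ℕ):ℝ) := Real.sq_sqrt hu
    have key : Real.sqrt ((C*x:ℕ):ℝ) ≤ (((C*x:ℕ):ℝ)/(2*(M:ℝ)*(C:ℝ)) + 2*(M:ℝ)*(C:ℝ))/2 := by
      rw [div_add' _ _ _ (ne_of_gt ht), div_div]
      rw [le_div_iff₀ (by positivity)]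
      nlinarith
    have hcx : ((C*x:ℕ):ℝ) = (C:ℝ)*(x:ℝ) := by push_cast; ring
    have hsimp : (((C*x:ℕ):ℝ)/(2*(M:ℝ)*(C:ℝ)) + 2*(M:ℝ)*(C:ℝ))/2
        = (x:ℝ)/(4*M) + (M:ℝ)*(C:ℝ) := by
      rw [hcx]
      field_simp
      ring
    linarith [key, hsimp ▸ key]
  have hkT : (k:ℝ) / T = 1/4 := by
    rw [hT_def]
    have hk0 : (k:ℝ) ≠ 0 := by
      have : (0:ℝ) < (k:ℝ) := by exact_mod_cast (by omega : 0 < k)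
      exact ne_of_gt this
    field_simp
  have hlow_card : ∀ x : ℕ, n₀ ≤ x → 8*(M:ℝ)*D ≤ (x:ℝ) →
      (x:ℝ)/(2*M) ≤ (((Finset.Icc 1 x).filter (fun n => n ∈ S)).card : ℝ) := by
    intro x hx hxD
    have h1 := main_count x hx
    have h2 := hsqrt x
    have h3 : (k:ℝ) * (((x:ℝ)/M + 2*Real.sqrt ((C*x:ℕ):ℝ))/T)
        = ((x:ℝ)/M + 2*Real.sqrt ((C*x:ℕ):ℝ))/4 := by
      rw [mul_comm, div_mul_eq_mul_div, mul_comm, ← div_mul_eq_mul_div, hkT]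
      ring
    rw [h3] at h1
    have hsq0 : (0:ℝ) ≤ Real.sqrt ((C*x:ℕ):ℝ) := Real.sqrt_nonneg _
    -- x/M - n₀ - 1 - (x/M + 2√)/4 ≥ (3/4)(x/M) - (n₀+1) - √/2 ≥ (5/8)x/M - D ≥ x/(2M)
    have hD8 : D ≤ (x:ℝ)/(8*M) := by
      rw [le_div_iff₀ (by positivity)]
      nlinarith
    have e1 : (x:ℝ)/(4*M) = (x:ℝ)/M/4 := by ring
    have e2 : (x:ℝ)/(8*M) = (x:ℝ)/M/8 := by ring
    have e3 : (x:ℝ)/(2*M) = (x:ℝ)/M/2 := by ring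
    rw [hD_def] at hD8
    linarith [h1, h2, hD8, e1, e2, e3]
  have hbound : ∀ᶠ x : ℕ in Filter.atTop,
      1/(2*(M:ℝ)) ≤ (((Finset.Icc 1 x).filter (fun n => n ∈ S)).card : ℝ)/x := by
    rw [Filter.eventually_atTop]
    refine ⟨max n₀ (Nat.ceil (8*(M:ℝ)*D)), fun x hx => ?_⟩
    have hx1 : n₀ ≤ x := le_trans (le_max_left _ _) hx
    have hx2 : 8*(M:ℝ)*D ≤ (x:ℝ) := by
      have h1 : Nat.ceil (8*(M:ℝ)*D) ≤ x := le_trans (le_max_right _ _) hx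
      calc 8*(M:ℝ)*D ≤ (Nat.ceil (8*(M:ℝ)*D) : ℝ) := Nat.le_ceil _
        _ ≤ (x:ℝ) := by exact_mod_cast h1
    have h1 := hlow_card x hx1 hx2
    have hx0 : (0:ℝ) < (x:ℝ) := by
      have : 0 < x := by omega
      exact_mod_cast this
    have h2 : (x:ℝ)/(2*M)/(x:ℝ) ≤ (((Finset.Icc 1 x).filter (fun n => n ∈ S)).card : ℝ)/x := by
      gcongr
    have h3 : (x:ℝ)/(2*M)/(x:ℝ) = 1/(2*(M:ℝ)) := by
      field_simp
    linarith [h3 ▸ h2]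
  have hle1 : ∀ x : ℕ, (((Finset.Icc 1 x).filter (fun n => n ∈ S)).card : ℝ)/x ≤ 1 := by
    intro x
    rcases Nat.eq_zero_or_pos x with rfl | hx
    · simp
    · have h1 : ((Finset.Icc 1 x).filter (fun n => n ∈ S)).card ≤ x := by
        calc ((Finset.Icc 1 x).filter (fun n => n ∈ S)).card
            ≤ (Finset.Icc 1 x).card := Finset.card_filter_le _ _
          _ = x := by rw [Nat.card_Icc]; omega
      rw [div_le_one (by exact_mod_cast hx)]
      exact_mod_cast h1
  have hcob : Filter.IsCoboundedUnder (· ≥ ·) Filter.atTop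
      (fun x : ℕ => (((Finset.Icc 1 x).filter (fun n => n ∈ S)).card : ℝ)/x) :=
    Filter.isCoboundedUnder_ge_of_le _ hle1
  have hliminf := Filter.le_liminf_of_le hcob hbound
  have hpos : (0:ℝ) < 1/(2*(M:ℝ)) := by positivity
  rw [lowerDensity]
  have heq : (Filter.atTop.liminf fun x : ℕ =>
        (((Finset.Icc 1 x).filter (fun n => n ∈ S)).card : ℝ) / x)
      = (Filter.atTop.liminf fun x : ℕ =>
        ((@Finset.filter ℕ (fun n => n ∈ S)
          (fun n => Classical.propDecidable (n ∈ S)) (Finset.Icc 1 x)).card : ℝ) / x) := by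
    congr 1
    funext x
    congr 2
    congr 1
    exact @Finset.filter_congr_decidable ℕ (Finset.Icc 1 x) (fun n => n ∈ S) _
      (fun n => Classical.propDecidable (n ∈ S))
  exact lt_of_lt_of_le hpos (heq ▸ hliminf)
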